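/- Assume Υ(k) ≥ 32 and APT ≥ 1. Let A_1,…,A_k be a partition of V whose k-means cost satisfies COST(A_1,…,A_k) ≤ APT·k/Υ(k). Let σ: [k] → [k] be any function with σ(i) ∈ argmin_{j∈[k]} ‖p^(j) − c_i‖ for every i, and for i ∈ [k] set M_{σ,i} = ∪_{j : σ(j) = i} A_j. Then Σ_{i=1}^k vol(M_{σ,i} △ S_i)/vol(S_i) ≤ 64·(1+APT)·k/Υ(k), where △ denotes symmetric difference. -/

import Mathlib

open Finset
open scoped RealInnerProductSpace

/-- The volume of a vertex set: the sum of the degrees of its vertices. -/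
noncomputable def gVol {V : Type*} (deg : V → ℝ) (S : Finset V) : ℝ := ∑ u ∈ S, deg u

/-- The total edge weight between two vertex sets. -/
noncomputable def gCut {V : Type*} (w : V → V → ℝ) (A B : Finset V) : ℝ :=
  ∑ u ∈ A, ∑ v ∈ B, w u v

/-- The conductance of a vertex set. -/
noncomputable def gCond {V : Type*} [Fintype V] [DecidableEq V]
    (w : V → V → ℝ) (deg : V → ℝ) (S : Finset V) : ℝ :=
  gCut w S Sᶜ / min (gVol deg S) (gVol deg Sᶜ)

/-- `S : Fin k → Finset V` is a partition of `V` into `k` non-empty sets. -/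
def IsPartition {V : Type*} [Fintype V] {k : ℕ} (S : Fin k → Finset V) : Prop :=
  (∀ i, (S i).Nonempty) ∧ (∀ i j, i ≠ j → Disjoint (S i) (S j)) ∧ ∀ v, ∃ i, v ∈ S i

/-- The vector `D^{1/2} χ_S`. -/
noncomputable def indVec {n : ℕ} (deg : Fin n → ℝ) (S : Finset (Fin n)) :
    EuclideanSpace ℝ (Fin n) :=
  WithLp.toLp 2 (fun v => if v ∈ S then Real.sqrt (deg v) else 0)

/-- The normalised indicator vector `D^{1/2} χ_S / ‖D^{1/2} χ_S‖` of a cluster `S`. -/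
noncomputable def gbarVec {n : ℕ} (deg : Fin n → ℝ) (S : Finset (Fin n)) :
    EuclideanSpace ℝ (Fin n) :=
  ‖indVec deg S‖⁻¹ • indVec deg S

/-- The degree-weighted centre of the embedded points of a cluster. -/
noncomputable def kmCentre {n d : ℕ} (deg : Fin n → ℝ)
    (F : Fin n → EuclideanSpace ℝ (Fin d)) (A : Finset (Fin n)) :
    EuclideanSpace ℝ (Fin d) :=
  (gVol deg A)⁻¹ • ∑ u ∈ A, deg u • F u

/-- The degree-weighted `k`-means cost of a partition in the spectral embedding. -/
noncomputable def kmCost {n d k : ℕ} (deg : Fin n → ℝ)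
    (F : Fin n → EuclideanSpace ℝ (Fin d)) (A : Fin k → Finset (Fin n)) : ℝ :=
  ∑ i, ∑ u ∈ A i, deg u * ‖F u - kmCentre deg F (A i)‖ ^ 2


lemma auxNormSq {m : ℕ} (x : EuclideanSpace ℝ (Fin m)) : ‖x‖^2 = ∑ j, (x j)^2 := by
  rw [← real_inner_self_eq_norm_sq, PiLp.inner_apply]
  simp [RCLike.inner_apply, sq]

lemma auxONB {n : ℕ} (hn : 0 < n) (f : Fin n → EuclideanSpace ℝ (Fin n)) (hf : Orthonormal ℝ f) :
    ∃ b : OrthonormalBasis (Fin n) ℝ (EuclideanSpace ℝ (Fin n)), ∀ i, b i = f i := by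
  have : Nonempty (Fin n) := ⟨⟨0, hn⟩⟩
  have card_eq : Fintype.card (Fin n) = Module.finrank ℝ (EuclideanSpace ℝ (Fin n)) := by
    simp [finrank_euclideanSpace]
  refine ⟨(basisOfOrthonormalOfCardEqFinrank hf card_eq).toOrthonormalBasis ?_, fun i => ?_⟩
  · rwa [coe_basisOfOrthonormalOfCardEqFinrank]
  · simp [Module.Basis.coe_toOrthonormalBasis, coe_basisOfOrthonormalOfCardEqFinrank]

lemma auxGeo {d : ℕ} (x c pi ps : EuclideanSpace ℝ (Fin d)) (h : ‖ps - c‖ ≤ ‖pi - c‖) :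
    ‖pi - ps‖^2 ≤ 8 * (‖x - c‖^2 + ‖x - pi‖^2) := by
  have t1 : dist pi ps ≤ dist pi c + dist c ps := dist_triangle pi c ps
  have t2 : dist pi c ≤ dist pi x + dist x c := dist_triangle pi x c
  have e1 : dist pi ps = ‖pi - ps‖ := dist_eq_norm _ _
  have e2 : dist pi c = ‖pi - c‖ := dist_eq_norm _ _
  have e3 : dist c ps = ‖ps - c‖ := by rw [dist_comm]; exact dist_eq_norm _ _
  have e4 : dist pi x = ‖x - pi‖ := by rw [dist_comm]; exact dist_eq_norm _ _
  have e5 : dist x c = ‖x - c‖ := dist_eq_norm _ _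
  have h0 : (0:ℝ) ≤ ‖pi - ps‖ := norm_nonneg _
  have t3 : ‖pi - ps‖ ≤ 2 * (‖x - pi‖ + ‖x - c‖) := by
    rw [e1, e2, e3] at t1; rw [e2, e4, e5] at t2; linarith
  nlinarith [mul_self_le_mul_self h0 t3, sq_nonneg (‖x - c‖ - ‖x - pi‖),
    norm_nonneg (x - c), norm_nonneg (x - pi)]

/-- split a sum over `Fin n` into the first `k` coordinates and the rest -/
lemma auxSplit {n k : ℕ} (hkn : k ≤ n) (g : Fin n → ℝ) :
    ∑ j, g j = (∑ j : Fin k, g (Fin.castLE hkn j)) +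
      ∑ j ∈ univ.filter (fun j : Fin n => k ≤ (j:ℕ)), g j := by
  have himg : univ.map (Fin.castLEEmb hkn) = univ.filter (fun j : Fin n => (j:ℕ) < k) := by
    ext j
    simp only [mem_map, mem_univ, true_and, mem_filter, Fin.castLEEmb_apply]
    constructor
    · rintro ⟨i, rfl⟩; exact i.isLt
    · intro hj; exact ⟨⟨(j:ℕ), hj⟩, by ext; simp⟩
  have h1 : (∑ j : Fin k, g (Fin.castLE hkn j)) =
      ∑ j ∈ univ.filter (fun j : Fin n => (j:ℕ) < k), g j := by
    rw [← himg, Finset.sum_map]; rfl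
  rw [h1]
  rw [← Finset.sum_filter_add_sum_filter_not univ (fun j : Fin n => (j:ℕ) < k) g]
  congr 1
  apply Finset.sum_congr _ (fun _ _ => rfl)
  ext j; simp [not_lt]

/-- sum over a partition -/
lemma auxPart {n k : ℕ} (S : Fin k → Finset (Fin n))
    (hdisj : ∀ i j, i ≠ j → Disjoint (S i) (S j))
    (iS : Fin n → Fin k) (hiS : ∀ u, u ∈ S (iS u)) (g : Fin k → Fin n → ℝ) :
    ∑ i, ∑ u ∈ S i, g i u = ∑ u, g (iS u) u := by
  have huniq : ∀ u i, u ∈ S i → i = iS u := by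
    intro u i hu
    by_contra hne
    exact (Finset.disjoint_left.mp (hdisj i (iS u) hne)) hu (hiS u)
  have : ∀ i, ∑ u ∈ S i, g i u = ∑ u, if u ∈ S i then g i u else 0 := by
    intro i; rw [Finset.sum_ite_mem, Finset.univ_inter]
  simp_rw [this]
  rw [Finset.sum_comm]
  apply Finset.sum_congr rfl
  intro u _
  rw [Finset.sum_eq_single (iS u)]
  · simp [hiS u]
  · intro i _ hne
    have : u ∉ S i := fun hu => hne (huniq u i hu)
    simp [this]
  · simp

noncomputable def Qf {n : ℕ} (N : Matrix (Fin n) (Fin n) ℝ) (x : Fin n → ℝ) : ℝ :=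
  ∑ u, ∑ v, x u * N u v * x v

section basic
variable {n : ℕ} {deg : Fin n → ℝ} {S : Finset (Fin n)}

lemma auxVolPos (hdegpos : ∀ u, 0 < deg u) (hne : S.Nonempty) : 0 < gVol deg S :=
  Finset.sum_pos (fun u _ => hdegpos u) hne

lemma auxIndNorm (hdegpos : ∀ u, 0 < deg u) :
    ‖indVec deg S‖ = Real.sqrt (gVol deg S) := by
  rw [EuclideanSpace.norm_eq]
  congr 1
  rw [gVol]
  rw [← Finset.sum_subset (Finset.subset_univ S)
    (fun v _ hv => by simp [indVec, hv] : ∀ v ∈ univ, v ∉ S → ‖indVec deg S v‖ ^ 2 = 0)]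
  apply Finset.sum_congr rfl
  intro v hv
  simp [indVec, hv, abs_of_nonneg (Real.sqrt_nonneg _), Real.sq_sqrt (hdegpos v).le]

lemma auxGbarApply (hdegpos : ∀ u, 0 < deg u) (v : Fin n) :
    gbarVec deg S v = if v ∈ S then Real.sqrt (deg v) / Real.sqrt (gVol deg S) else 0 := by
  rw [gbarVec]
  have : (‖indVec deg S‖⁻¹ • indVec deg S) v = ‖indVec deg S‖⁻¹ * indVec deg S v := rfl
  rw [this, auxIndNorm hdegpos]
  by_cases hv : v ∈ S <;> simp [indVec, hv, div_eq_inv_mul]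

lemma auxInnerGbar (hdegpos : ∀ u, 0 < deg u) (x : EuclideanSpace ℝ (Fin n)) :
    ⟪x, gbarVec deg S⟫ = (∑ v ∈ S, x v * Real.sqrt (deg v)) / Real.sqrt (gVol deg S) := by
  rw [PiLp.inner_apply]
  simp only [RCLike.inner_apply, starRingEnd_apply, star_trivial]
  rw [Finset.sum_div]
  rw [Finset.sum_congr rfl (fun v _ => mul_comm ((gbarVec deg S) v) (x v))]
  rw [← Finset.sum_subset (Finset.subset_univ S)
    (fun v _ hv => by simp [auxGbarApply hdegpos, hv] :
      ∀ v ∈ univ, v ∉ S → x v * gbarVec deg S v = 0)]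
  apply Finset.sum_congr rfl
  intro v hv
  simp [auxGbarApply hdegpos, hv, mul_div_assoc]

end basic

section ortho
variable {n : ℕ} {deg : Fin n → ℝ}

lemma auxGbarSelf (hdegpos : ∀ u, 0 < deg u) {S : Finset (Fin n)} (hne : S.Nonempty) :
    ⟪gbarVec deg S, gbarVec deg S⟫ = 1 := by
  rw [auxInnerGbar hdegpos]
  have hvol : 0 < gVol deg S := auxVolPos hdegpos hne
  have : ∑ v ∈ S, gbarVec deg S v * Real.sqrt (deg v) =
      ∑ v ∈ S, deg v / Real.sqrt (gVol deg S) := by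
    apply Finset.sum_congr rfl
    intro v hv
    rw [auxGbarApply hdegpos, if_pos hv, div_mul_eq_mul_div, Real.mul_self_sqrt (hdegpos v).le]
  rw [this, ← Finset.sum_div, ← gVol, div_div, Real.mul_self_sqrt hvol.le, div_self hvol.ne']

lemma auxGbarDisj (hdegpos : ∀ u, 0 < deg u) {S T : Finset (Fin n)} (hd : Disjoint S T) :
    ⟪gbarVec deg S, gbarVec deg T⟫ = 0 := by
  rw [auxInnerGbar hdegpos]
  have : ∀ v ∈ T, gbarVec deg S v * Real.sqrt (deg v) = 0 := by
    intro v hv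
    have : v ∉ S := Finset.disjoint_right.mp hd hv
    simp [auxGbarApply hdegpos, this]
  rw [Finset.sum_congr rfl this, Finset.sum_const_zero, zero_div]

end ortho

section quad
variable {n : ℕ}

lemma auxQeig (N : Matrix (Fin n) (Fin n) ℝ) (lam : Fin n → ℝ)
    (f : Fin n → EuclideanSpace ℝ (Fin n))
    (b : OrthonormalBasis (Fin n) ℝ (EuclideanSpace ℝ (Fin n))) (hb : ∀ i, b i = f i)
    (heig : ∀ i, N.mulVec (f i) = lam i • (f i))
    (x : EuclideanSpace ℝ (Fin n)) :
    Qf N x = ∑ j, lam j * ⟪f j, x⟫ ^ 2 := by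
  have hx : ∀ v, x v = ∑ j, (⟪f j, x⟫ : ℝ) * f j v := by
    intro v
    have := b.sum_repr' x
    have h2 := congrFun (congrArg (fun (z : EuclideanSpace ℝ (Fin n)) => (z : Fin n → ℝ)) this) v
    simp only at h2
    rw [← h2]
    simp only [← hb]
    rw [WithLp.ofLp_sum, Finset.sum_apply]
    rfl
  have hNf : ∀ j u, ∑ v, N u v * f j v = lam j * f j u := by
    intro j u
    have := congrFun (heig j) u
    simpa [Matrix.mulVec, dotProduct] using this
  have hinner : ∀ j, (⟪f j, x⟫ : ℝ) = ∑ u, f j u * x u := by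
    intro j; rw [PiLp.inner_apply]; simp [RCLike.inner_apply, mul_comm]
  calc Qf N x = ∑ u, x u * ∑ v, N u v * x v := by
        rw [Qf]; apply Finset.sum_congr rfl; intro u _
        rw [Finset.mul_sum]; apply Finset.sum_congr rfl; intro v _; ring
  _ = ∑ u, x u * ∑ j, (⟪f j, x⟫ : ℝ) * (lam j * f j u) := by
        apply Finset.sum_congr rfl; intro u _
        congr 1
        calc ∑ v, N u v * x v = ∑ v, ∑ j, (⟪f j, x⟫ : ℝ) * (N u v * f j v) := by
              apply Finset.sum_congr rfl; intro v _
              rw [hx v, Finset.mul_sum]; apply Finset.sum_congr rfl; intro j _; ring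
        _ = ∑ j, (⟪f j, x⟫ : ℝ) * ∑ v, N u v * f j v := by
              rw [Finset.sum_comm]; apply Finset.sum_congr rfl; intro j _
              rw [Finset.mul_sum]
        _ = ∑ j, (⟪f j, x⟫ : ℝ) * (lam j * f j u) := by
              apply Finset.sum_congr rfl; intro j _; rw [hNf]
  _ = ∑ j, lam j * (⟪f j, x⟫ : ℝ) * ∑ u, f j u * x u := by
        simp_rw [Finset.mul_sum]
        rw [Finset.sum_comm]
        apply Finset.sum_congr rfl; intro j _
        apply Finset.sum_congr rfl; intro u _; ring
  _ = ∑ j, lam j * ⟪f j, x⟫ ^ 2 := by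
        apply Finset.sum_congr rfl; intro j _; rw [← hinner]; ring

lemma auxQnonneg (N : Matrix (Fin n) (Fin n) ℝ) (w : Fin n → Fin n → ℝ)
    (hsymm : ∀ u v, w u v = w v u) (hnonneg : ∀ u v, 0 ≤ w u v)
    (deg : Fin n → ℝ) (hdeg : ∀ u, deg u = ∑ v, w u v) (hdegpos : ∀ u, 0 < deg u)
    (hN : ∀ u v, N u v =
      (if u = v then (1 : ℝ) else 0) - w u v / (Real.sqrt (deg u) * Real.sqrt (deg v)))
    (x : Fin n → ℝ) : 0 ≤ Qf N x := by
  set y : Fin n → ℝ := fun u => x u / Real.sqrt (deg u) with hy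
  have hsq : ∀ u, y u ^ 2 * deg u = x u ^ 2 := by
    intro u
    rw [hy]
    rw [div_pow, Real.sq_sqrt (hdegpos u).le]
    exact div_mul_cancel₀ _ (hdegpos u).ne' 
  have hcol : ∀ v, ∑ u, w u v = deg v := by
    intro v
    rw [hdeg v]
    exact Finset.sum_congr rfl fun u _ => hsymm u v
  have hA : Qf N x = (∑ u, (x u)^2) - ∑ u, ∑ v, w u v * y u * y v := by
    rw [Qf, ← Finset.sum_sub_distrib]
    apply Finset.sum_congr rfl
    intro u _
    have hu : ∀ v, x u * N u v * x v =
        (if u = v then x u * x v else 0) - w u v * y u * y v := by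
      intro v
      rw [hN u v, hy]
      by_cases h : u = v
      · subst h; rw [if_pos rfl, if_pos rfl]; ring
      · rw [if_neg h, if_neg h]; ring
    rw [Finset.sum_congr rfl fun v _ => hu v, Finset.sum_sub_distrib]
    congr 1
    rw [Finset.sum_ite_eq univ u (fun v => x u * x v)]
    simp [sq]
  have hB : ∑ u, ∑ v, w u v * (y u - y v)^2 =
      2*(∑ u, (x u)^2) - 2*(∑ u, ∑ v, w u v * y u * y v) := by
    have hexp : ∀ u v, w u v * (y u - y v)^2 =
        w u v * y u ^2 - 2*(w u v * y u * y v) + w u v * y v ^2 := by intro u v; ring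
    simp_rw [hexp, Finset.sum_add_distrib, Finset.sum_sub_distrib]
    have e1 : ∑ u, ∑ v, w u v * y u ^ 2 = ∑ u, (x u)^2 := by
      apply Finset.sum_congr rfl
      intro u _
      rw [← Finset.sum_mul, ← hdeg u] ; rw [mul_comm, hsq u]
    have e2 : ∑ u, ∑ v, w u v * y v ^ 2 = ∑ u, (x u)^2 := by
      rw [Finset.sum_comm]
      apply Finset.sum_congr rfl
      intro v _
      have : ∑ u, w u v * y v ^2 = (∑ u, w u v) * y v ^2 := by rw [Finset.sum_mul]
      rw [this, hcol v, mul_comm, hsq v]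
    have e3 : ∑ u, ∑ v, 2*(w u v * y u * y v) = 2 * ∑ u, ∑ v, w u v * y u * y v := by
      rw [Finset.mul_sum]
      apply Finset.sum_congr rfl
      intro u _
      rw [Finset.mul_sum]
    rw [e1, e2, e3]; ring
  have hC : 0 ≤ ∑ u, ∑ v, w u v * (y u - y v)^2 :=
    Finset.sum_nonneg fun u _ => Finset.sum_nonneg fun v _ =>
      mul_nonneg (hnonneg u v) (sq_nonneg _)
  linarith

lemma auxQgbar (N : Matrix (Fin n) (Fin n) ℝ) (w : Fin n → Fin n → ℝ)
    (deg : Fin n → ℝ) (hdeg : ∀ u, deg u = ∑ v, w u v) (hdegpos : ∀ u, 0 < deg u)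
    (hN : ∀ u v, N u v =
      (if u = v then (1 : ℝ) else 0) - w u v / (Real.sqrt (deg u) * Real.sqrt (deg v)))
    (S : Finset (Fin n)) :
    Qf N (gbarVec deg S) = gCut w S Sᶜ / gVol deg S := by
  set g := gbarVec deg S with hg
  have hzero : ∀ u, u ∉ S → g u = 0 := by
    intro u hu; rw [hg, auxGbarApply hdegpos, if_neg hu]
  have h1 : Qf N g = ∑ u ∈ S, ∑ v ∈ S, g u * N u v * g v := by
    rw [Qf]
    rw [← Finset.sum_subset (Finset.subset_univ S)
      (fun u _ hu => by simp [hzero u hu] : ∀ u ∈ univ, u ∉ S → ∑ v, g u * N u v * g v = 0)]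
    apply Finset.sum_congr rfl
    intro u _
    rw [← Finset.sum_subset (Finset.subset_univ S)
      (fun v _ hv => by simp [hzero v hv] : ∀ v ∈ univ, v ∉ S → g u * N u v * g v = 0)]
  have hterm : ∀ u ∈ S, ∀ v ∈ S, g u * N u v * g v =
      ((if u = v then deg u else 0) - w u v) / gVol deg S := by
    intro u hu v hv
    have h1' : Real.sqrt (deg u) ≠ 0 := (Real.sqrt_pos.mpr (hdegpos u)).ne'
    have h2' : Real.sqrt (deg v) ≠ 0 := (Real.sqrt_pos.mpr (hdegpos v)).ne'
    have hvol : (0:ℝ) < gVol deg S := auxVolPos hdegpos ⟨u, hu⟩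
    have hss : Real.sqrt (gVol deg S) * Real.sqrt (gVol deg S) = gVol deg S :=
      Real.mul_self_sqrt hvol.le
    have key : Real.sqrt (deg u) * N u v * Real.sqrt (deg v) =
        (if u = v then deg u else 0) - w u v := by
      rw [hN u v]
      by_cases h : u = v
      · subst h
        rw [if_pos rfl, if_pos rfl]
        have e : Real.sqrt (deg u) * Real.sqrt (deg u) = deg u :=
          Real.mul_self_sqrt (hdegpos u).le
        have e0 : Real.sqrt (deg u) * Real.sqrt (deg u) ≠ 0 := by
          rw [e]; exact (hdegpos u).ne'
        calc Real.sqrt (deg u) * ((1:ℝ) - w u u / (Real.sqrt (deg u) * Real.sqrt (deg u))) *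
              Real.sqrt (deg u)
            = Real.sqrt (deg u) * Real.sqrt (deg u) -
              w u u / (Real.sqrt (deg u) * Real.sqrt (deg u)) *
                (Real.sqrt (deg u) * Real.sqrt (deg u)) := by ring
          _ = deg u - w u u := by rw [div_mul_cancel₀ _ e0, e]
      · rw [if_neg h, if_neg h]
        have e0 : Real.sqrt (deg u) * Real.sqrt (deg v) ≠ 0 := mul_ne_zero h1' h2'
        calc Real.sqrt (deg u) * ((0:ℝ) - w u v / (Real.sqrt (deg u) * Real.sqrt (deg v))) *
              Real.sqrt (deg v)
            = -(w u v / (Real.sqrt (deg u) * Real.sqrt (deg v)) *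
                (Real.sqrt (deg u) * Real.sqrt (deg v))) := by ring
          _ = 0 - w u v := by rw [div_mul_cancel₀ _ e0]; ring
    have hgu : g u = Real.sqrt (deg u) / Real.sqrt (gVol deg S) := by
      rw [hg, auxGbarApply hdegpos, if_pos hu]
    have hgv : g v = Real.sqrt (deg v) / Real.sqrt (gVol deg S) := by
      rw [hg, auxGbarApply hdegpos, if_pos hv]
    calc g u * N u v * g v
        = Real.sqrt (deg u) * N u v * Real.sqrt (deg v) /
          (Real.sqrt (gVol deg S) * Real.sqrt (gVol deg S)) := by rw [hgu, hgv]; ring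
      _ = ((if u = v then deg u else 0) - w u v) / gVol deg S := by rw [key, hss]
  have h2 : Qf N g = ((∑ u ∈ S, deg u) - gCut w S S) / gVol deg S := by
    rw [h1, Finset.sum_congr rfl (fun u hu => Finset.sum_congr rfl (hterm u hu))]
    simp_rw [← Finset.sum_div]
    congr 1
    rw [gCut, ← Finset.sum_sub_distrib]
    apply Finset.sum_congr rfl
    intro u hu
    rw [Finset.sum_sub_distrib]
    congr 1
    rw [Finset.sum_ite_eq S u (fun _ => deg u), if_pos hu]
  have h3 : (∑ u ∈ S, deg u) - gCut w S S = gCut w S Sᶜ := by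
    rw [gCut, gCut, ← Finset.sum_sub_distrib]
    apply Finset.sum_congr rfl
    intro u _
    rw [hdeg u, ← Finset.sum_add_sum_compl S (w u)]
    ring
  rw [h2, h3]

set_option maxHeartbeats 1000000 in
/-- Misclassification bound for the mapping σ (Lemma 4.9). -/
theorem sigma_misclassification_bound
    {n k : ℕ} (hk : 0 < k) (hkn : k < n)
    (w : Fin n → Fin n → ℝ)
    (hsymm : ∀ u v, w u v = w v u)
    (hnonneg : ∀ u v, 0 ≤ w u v)
    (deg : Fin n → ℝ) (hdeg : ∀ u, deg u = ∑ v, w u v)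
    (hdegpos : ∀ u, 0 < deg u)
    -- the normalised Laplacian `N = I - D^{-1/2} A D^{-1/2}`
    (N : Matrix (Fin n) (Fin n) ℝ)
    (hN : ∀ u v, N u v =
      (if u = v then (1 : ℝ) else 0) - w u v / (Real.sqrt (deg u) * Real.sqrt (deg v)))
    -- its eigenvalues `lam 0 ≤ … ≤ lam (n-1)` with orthonormal eigenvectors `f`
    (lam : Fin n → ℝ) (hlam : Monotone lam)
    (f : Fin n → EuclideanSpace ℝ (Fin n))
    (hf : Orthonormal ℝ f)
    (heig : ∀ i, N.mulVec (f i) = lam i • (f i))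
    -- `S` is a partition attaining the `k`-way expansion `ρ(k)`
    (S : Fin k → Finset (Fin n)) (hS : IsPartition S)
    (rho : ℝ)
    (hrho : rho = ⨆ i, gCond w deg (S i))
    (hopt : ∀ T : Fin k → Finset (Fin n), IsPartition T → rho ≤ ⨆ i, gCond w deg (T i))
    (hrhopos : 0 < rho)
    (hlampos : 0 < lam ⟨k, hkn⟩)
    -- `Υ(k) = λ_{k+1} / ρ(k)`
    (Upsilon : ℝ) (hU : Upsilon = lam ⟨k, hkn⟩ / rho)
    -- the normalised indicator vectors of the clusters
    (gbar : Fin k → EuclideanSpace ℝ (Fin n))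
    (hgbar : ∀ i, gbar i = gbarVec deg (S i))
    -- the spectral embedding `F(u) = (f_1(u), …, f_k(u))/√deg(u)`
    (F : Fin n → EuclideanSpace ℝ (Fin k))
    (hF : ∀ u j, F u j = f (Fin.castLE hkn.le j) u / Real.sqrt (deg u))
    -- the approximate cluster centres `p^(i)(j) = ⟨f_j, ḡ_i⟩ / √vol(S_i)`
    (p : Fin k → EuclideanSpace ℝ (Fin k))
    (hp : ∀ i j, p i j = ⟪f (Fin.castLE hkn.le j), gbar i⟫ / Real.sqrt (gVol deg (S i)))
    (APT : ℝ) (hAPT : 1 ≤ APT)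
    (hU32 : 32 ≤ Upsilon)
    -- `A` is a partition of `V` with k-means cost at most `APT·k/Υ(k)`
    (A : Fin k → Finset (Fin n)) (hA : IsPartition A)
    (c : Fin k → EuclideanSpace ℝ (Fin k))
    (hc : ∀ i, c i = kmCentre deg F (A i))
    (hcost : kmCost deg F A ≤ APT * k / Upsilon)
    -- `σ(i)` minimises the distance from `c i` to the approximate centres
    (sigma : Fin k → Fin k)
    (hsigma : ∀ i j, ‖p (sigma i) - c i‖ ≤ ‖p j - c i‖)
    -- `M_{σ,i}` is the union of the clusters mapped to `i`
    (M : Fin k → Finset (Fin n))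
    (hM : ∀ i, M i = (Finset.univ.filter (fun j => sigma j = i)).biUnion A) :
    ∑ i : Fin k, gVol deg (symmDiff (M i) (S i)) / gVol deg (S i) ≤
      64 * (1 + APT) * k / Upsilon := by
  classical
  have hn : 0 < n := hk.trans hkn
  obtain ⟨b, hb⟩ := auxONB hn f hf
  have hvolpos : ∀ i, 0 < gVol deg (S i) := fun i => auxVolPos hdegpos (hS.1 i)
  -- Parseval facts
  have hsum1 : ∀ i, ∑ j, (⟪f j, gbar i⟫ : ℝ)^2 = 1 := by
    intro i
    have h := b.sum_inner_mul_inner (gbar i) (gbar i)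
    have h2 : ∀ j, (⟪gbar i, b j⟫ : ℝ) * ⟪b j, gbar i⟫ = (⟪f j, gbar i⟫ : ℝ)^2 := by
      intro j
      rw [hb j, real_inner_comm (gbar i) (f j), sq]
    rw [Finset.sum_congr rfl (fun j _ => h2 j)] at h
    rw [h, hgbar i, auxGbarSelf hdegpos (hS.1 i)]
  have hsum0 : ∀ i i', i ≠ i' → ∑ j, (⟪f j, gbar i⟫ : ℝ) * ⟪f j, gbar i'⟫ = 0 := by
    intro i i' hne
    have h := b.sum_inner_mul_inner (gbar i) (gbar i')
    have h2 : ∀ j, (⟪gbar i, b j⟫ : ℝ) * ⟪b j, gbar i'⟫ =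
        (⟪f j, gbar i⟫ : ℝ) * ⟪f j, gbar i'⟫ := by
      intro j
      rw [hb j, real_inner_comm (gbar i) (f j)]
    rw [Finset.sum_congr rfl (fun j _ => h2 j)] at h
    rw [h, hgbar i, hgbar i', auxGbarDisj hdegpos (hS.2.1 i i' hne)]
  -- eigenvalue facts
  have hQi : ∀ i, Qf N (gbar i) = ∑ j, lam j * (⟪f j, gbar i⟫ : ℝ)^2 :=
    fun i => auxQeig N lam f b hb heig (gbar i)
  have hQle : ∀ i, Qf N (gbar i) ≤ rho := by
    intro i
    rw [hgbar i, auxQgbar N w deg hdeg hdegpos hN (S i)]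
    have hrhoge : gCond w deg (S i) ≤ rho := by
      rw [hrho]
      exact le_ciSup (f := fun i => gCond w deg (S i)) (Set.Finite.bddAbove (Set.finite_range _)) i
    have hcutnn : 0 ≤ gCut w (S i) (S i)ᶜ :=
      Finset.sum_nonneg fun u _ => Finset.sum_nonneg fun v _ => hnonneg u v
    by_cases hC : ((S i)ᶜ : Finset (Fin n)) = ∅
    · rw [hC]
      have : gCut w (S i) (∅ : Finset (Fin n)) = 0 := by simp [gCut]
      rw [this, zero_div]
      exact hrhopos.le
    · have hvolc : 0 < gVol deg ((S i)ᶜ) :=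
        auxVolPos hdegpos (Finset.nonempty_of_ne_empty hC)
      have hmin : 0 < min (gVol deg (S i)) (gVol deg ((S i)ᶜ)) := lt_min (hvolpos i) hvolc
      have h1 : gCut w (S i) (S i)ᶜ / gVol deg (S i) ≤ gCond w deg (S i) := by
        rw [gCond]
        apply div_le_div_of_nonneg_left hcutnn hmin (min_le_left _ _)
      linarith
  have hlamnn : ∀ j, 0 ≤ lam j := by
    intro j
    have h1 : 0 ≤ Qf N (f j) := auxQnonneg N w hsymm hnonneg deg hdeg hdegpos hN (f j)
    have h2 : Qf N (f j) = ∑ j', lam j' * (⟪f j', f j⟫ : ℝ)^2 :=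
      auxQeig N lam f b hb heig (f j)
    have h3 : ∀ j', lam j' * (⟪f j', f j⟫ : ℝ)^2 = if j' = j then lam j' else 0 := by
      intro j'
      rw [orthonormal_iff_ite.mp hf j' j]
      by_cases h : j' = j <;> simp [h]
    rw [Finset.sum_congr rfl (fun j' _ => h3 j'), Finset.sum_ite_eq' univ j lam] at h2
    simp only [Finset.mem_univ, if_true] at h2
    linarith [h1, h2.symm.le]
  set L : ℝ := lam ⟨k, hkn⟩ with hL
  set ε : ℝ := rho / L with hε
  have hLpos : 0 < L := hlampos
  have hUpos : 0 < Upsilon := by rw [hU]; positivity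
  have hεU : ε = Upsilon⁻¹ := by rw [hε, hU, inv_div]
  have hεpos : 0 < ε := by rw [hε]; positivity
  have hεb : ε ≤ 1/32 := by
    rw [hεU]
    rw [inv_le_comm₀ (by positivity) (by norm_num)]
    simpa using hU32
  set tailS : Finset (Fin n) := univ.filter (fun j : Fin n => k ≤ (j : ℕ)) with htailS
  have htail : ∀ i, ∑ j ∈ tailS, (⟪f j, gbar i⟫ : ℝ)^2 ≤ ε := by
    intro i
    have h1 : L * ∑ j ∈ tailS, (⟪f j, gbar i⟫ : ℝ)^2 ≤
        ∑ j ∈ tailS, lam j * (⟪f j, gbar i⟫ : ℝ)^2 := by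
      rw [Finset.mul_sum]
      apply Finset.sum_le_sum
      intro j hj
      have hkj : (⟨k, hkn⟩ : Fin n) ≤ j := by
        rw [htailS] at hj
        simp only [Finset.mem_filter] at hj
        exact hj.2
      exact mul_le_mul_of_nonneg_right (hlam hkj) (sq_nonneg _)
    have h2 : ∑ j ∈ tailS, lam j * (⟪f j, gbar i⟫ : ℝ)^2 ≤
        ∑ j, lam j * (⟪f j, gbar i⟫ : ℝ)^2 := by
      apply Finset.sum_le_sum_of_subset_of_nonneg (Finset.subset_univ _)
      intro j _ _
      exact mul_nonneg (hlamnn j) (sq_nonneg _)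
    have h3 := (hQi i).symm.le.trans (hQle i)
    rw [hε, le_div_iff₀ hLpos]
    nlinarith
  have htailnn : ∀ i, 0 ≤ ∑ j ∈ tailS, (⟪f j, gbar i⟫ : ℝ)^2 :=
    fun i => Finset.sum_nonneg fun j _ => sq_nonneg _
  have hsplit : ∀ g : Fin n → ℝ,
      ∑ j, g j = (∑ j : Fin k, g (Fin.castLE hkn.le j)) + ∑ j ∈ tailS, g j :=
    fun g => auxSplit hkn.le g
  have hhead : ∀ i, 1 - ε ≤ ∑ j : Fin k, (⟪f (Fin.castLE hkn.le j), gbar i⟫ : ℝ)^2 := by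
    intro i
    have h1 := hsplit (fun j => (⟪f j, gbar i⟫ : ℝ)^2)
    rw [hsum1 i] at h1
    have := htail i
    linarith
  have hcross : ∀ i i', i ≠ i' →
      |∑ j : Fin k, (⟪f (Fin.castLE hkn.le j), gbar i⟫ : ℝ) *
        ⟪f (Fin.castLE hkn.le j), gbar i'⟫| ≤ ε := by
    intro i i' hne
    have h1 := hsplit (fun j => (⟪f j, gbar i⟫ : ℝ) * ⟪f j, gbar i'⟫)
    rw [hsum0 i i' hne] at h1
    have hcs : (∑ j ∈ tailS, (⟪f j, gbar i⟫ : ℝ) * ⟪f j, gbar i'⟫)^2 ≤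
        (∑ j ∈ tailS, (⟪f j, gbar i⟫ : ℝ)^2) * ∑ j ∈ tailS, (⟪f j, gbar i'⟫ : ℝ)^2 :=
      Finset.sum_mul_sq_le_sq_mul_sq tailS _ _
    have ht1 := htail i
    have ht2 := htail i'
    have ht1n := htailnn i
    have ht2n := htailnn i'
    have hsq : (∑ j ∈ tailS, (⟪f j, gbar i⟫ : ℝ) * ⟪f j, gbar i'⟫)^2 ≤ ε^2 := by
      nlinarith
    have habs : |∑ j ∈ tailS, (⟪f j, gbar i⟫ : ℝ) * ⟪f j, gbar i'⟫| ≤ ε := by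
      have := abs_nonneg (∑ j ∈ tailS, (⟪f j, gbar i⟫ : ℝ) * ⟪f j, gbar i'⟫)
      nlinarith [sq_abs (∑ j ∈ tailS, (⟪f j, gbar i⟫ : ℝ) * ⟪f j, gbar i'⟫)]
    have heq : ∑ j : Fin k, (⟪f (Fin.castLE hkn.le j), gbar i⟫ : ℝ) *
        ⟪f (Fin.castLE hkn.le j), gbar i'⟫ =
        -(∑ j ∈ tailS, (⟪f j, gbar i⟫ : ℝ) * ⟪f j, gbar i'⟫) := by linarith
    rw [heq, abs_neg]
    exact habs
  -- coordinates of p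
  have hpcoord : ∀ i (j : Fin k), p i j =
      (⟪f (Fin.castLE hkn.le j), gbar i⟫ : ℝ) / Real.sqrt (gVol deg (S i)) := hp
  -- separation of centres
  have hsep : ∀ i i', i ≠ i' →
      (1 - 2*ε) * (1/gVol deg (S i) + 1/gVol deg (S i')) ≤ ‖p i - p i'‖^2 := by
    intro i i' hne
    have hvi : 0 < gVol deg (S i) := hvolpos i
    have hvi' : 0 < gVol deg (S i') := hvolpos i'
    set s : ℝ := Real.sqrt (gVol deg (S i)) with hs
    set t : ℝ := Real.sqrt (gVol deg (S i')) with ht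
    have hspos : 0 < s := Real.sqrt_pos.mpr hvi
    have htpos : 0 < t := Real.sqrt_pos.mpr hvi'
    have hss : s * s = gVol deg (S i) := Real.mul_self_sqrt hvi.le
    have htt : t * t = gVol deg (S i') := Real.mul_self_sqrt hvi'.le
    set A : ℝ := ∑ j : Fin k, (⟪f (Fin.castLE hkn.le j), gbar i⟫ : ℝ)^2 with hA
    set B : ℝ := ∑ j : Fin k, (⟪f (Fin.castLE hkn.le j), gbar i'⟫ : ℝ)^2 with hB
    set C : ℝ := ∑ j : Fin k, (⟪f (Fin.castLE hkn.le j), gbar i⟫ : ℝ) *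
      ⟪f (Fin.castLE hkn.le j), gbar i'⟫ with hC
    have hnorm : ‖p i - p i'‖^2 = A * (1/(s*s)) + B * (1/(t*t)) - 2*C*(1/(s*t)) := by
      rw [auxNormSq]
      have hterm : ∀ j : Fin k, ((p i - p i') j)^2 =
          (⟪f (Fin.castLE hkn.le j), gbar i⟫ : ℝ)^2 * (1/(s*s)) +
          (⟪f (Fin.castLE hkn.le j), gbar i'⟫ : ℝ)^2 * (1/(t*t)) -
          2 * ((⟪f (Fin.castLE hkn.le j), gbar i⟫ : ℝ) *
            ⟪f (Fin.castLE hkn.le j), gbar i'⟫) * (1/(s*t)) := by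
        intro j
        have happ : (p i - p i') j = p i j - p i' j := rfl
        rw [happ, hpcoord i j, hpcoord i' j, ← hs, ← ht]
        field_simp
        ring
      rw [Finset.sum_congr rfl (fun j _ => hterm j)]
      rw [Finset.sum_sub_distrib, Finset.sum_add_distrib, ← Finset.sum_mul, ← Finset.sum_mul,
        hA, hB]
      congr 1
      rw [← Finset.sum_mul, ← Finset.mul_sum, hC]
    have hh1 : 1 - ε ≤ A := hhead i
    have hh2 : 1 - ε ≤ B := hhead i'
    have hcc := abs_le.mp (hcross i i' hne)
    have hC1 : C ≤ ε := hcc.2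
    have hamgm : 2*(1/(s*t)) ≤ 1/(s*s) + 1/(t*t) := by
      have h0 : 0 ≤ (1/s - 1/t)^2 := sq_nonneg _
      have h1 : (1/s - 1/t)^2 = 1/(s*s) + 1/(t*t) - 2*(1/(s*t)) := by
        field_simp
        ring
      linarith [h1 ▸ h0]
    rw [← hss, ← htt, hnorm]
    have hP : 0 < 1/(s*s) := by positivity
    have hQ : 0 < 1/(t*t) := by positivity
    have hR : 0 < 1/(s*t) := by positivity
    have t1 : (1-ε)*(1/(s*s)) ≤ A*(1/(s*s)) := mul_le_mul_of_nonneg_right hh1 hP.le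
    have t2 : (1-ε)*(1/(t*t)) ≤ B*(1/(t*t)) := mul_le_mul_of_nonneg_right hh2 hQ.le
    have t3 : C*(1/(s*t)) ≤ ε*(1/(s*t)) := mul_le_mul_of_nonneg_right hC1 hR.le
    have t4 : ε*(2*(1/(s*t))) ≤ ε*(1/(s*s)+1/(t*t)) := mul_le_mul_of_nonneg_left hamgm hεpos.le
    ring_nf at t1 t2 t3 t4 ⊢
    linarith [t1, t2, t3, t4]
  -- choice functions for the partitions
  choose iS hiS using hS.2.2
  choose jA hjA using hA.2.2
  have hαind : ∀ i j, ∑ u ∈ S i, Real.sqrt (deg u) * f j u =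
      Real.sqrt (gVol deg (S i)) * ⟪f j, gbar i⟫ := by
    intro i j
    have h := auxInnerGbar (S := S i) hdegpos (f j)
    have hvs : Real.sqrt (gVol deg (S i)) ≠ 0 := (Real.sqrt_pos.mpr (hvolpos i)).ne'
    rw [hgbar i, h]
    have h2 : Real.sqrt (gVol deg (S i)) *
        ((∑ v ∈ S i, f j v * Real.sqrt (deg v)) / Real.sqrt (gVol deg (S i))) =
        ∑ v ∈ S i, f j v * Real.sqrt (deg v) := by
      field_simp
    rw [h2]
    exact Finset.sum_congr rfl fun u _ => mul_comm _ _
  -- KEY1 : the embedding is close to the approximate centres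
  have hkey1 : ∑ u, deg u * ‖F u - p (iS u)‖^2 ≤ (k : ℝ) * ε := by
    rw [← auxPart S hS.2.1 iS hiS (fun i u => deg u * ‖F u - p i‖^2)]
    have hper : ∀ i, ∑ u ∈ S i, deg u * ‖F u - p i‖^2 =
        ∑ j : Fin k, ((∑ u ∈ S i, (f (Fin.castLE hkn.le j) u)^2) -
          (⟪f (Fin.castLE hkn.le j), gbar i⟫ : ℝ)^2) := by
      intro i
      have hvi : 0 < gVol deg (S i) := hvolpos i
      set sv : ℝ := Real.sqrt (gVol deg (S i)) with hsv
      have hsvpos : 0 < sv := Real.sqrt_pos.mpr hvi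
      have hssv : sv * sv = gVol deg (S i) := Real.mul_self_sqrt hvi.le
      have e : ∀ u, deg u * ‖F u - p i‖^2 = ∑ j : Fin k, deg u * ((F u - p i) j)^2 := by
        intro u; rw [auxNormSq, Finset.mul_sum]
      rw [Finset.sum_congr rfl fun u _ => e u, Finset.sum_comm]
      apply Finset.sum_congr rfl
      intro j _
      set c : ℝ := (⟪f (Fin.castLE hkn.le j), gbar i⟫ : ℝ) / sv with hc'
      have hto : ∀ u ∈ S i, deg u * ((F u - p i) j)^2 =
          (f (Fin.castLE hkn.le j) u)^2
          - 2*c*(Real.sqrt (deg u) * f (Fin.castLE hkn.le j) u) + deg u * c^2 := by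
        intro u _
        have happ : (F u - p i) j = F u j - p i j := rfl
        rw [happ, hF u j, hpcoord i j, ← hsv, ← hc']
        have hdu : 0 < deg u := hdegpos u
        have hsd : Real.sqrt (deg u) ≠ 0 := (Real.sqrt_pos.mpr hdu).ne'
        have h2 : Real.sqrt (deg u) ^ 2 = deg u := Real.sq_sqrt hdu.le
        set a := f (Fin.castLE hkn.le j) u
        have hd1 : deg u * (a / Real.sqrt (deg u) - c)^2 =
            (Real.sqrt (deg u) * (a / Real.sqrt (deg u) - c))^2 := by
          rw [mul_pow, h2]
        have hd2 : Real.sqrt (deg u) * (a / Real.sqrt (deg u) - c) =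
            a - Real.sqrt (deg u) * c := by
          rw [mul_sub]
          congr 1
          rw [← mul_div_assoc, mul_comm (Real.sqrt (deg u)) a, mul_div_assoc, div_self hsd,
            mul_one]
        rw [hd1, hd2]
        linear_combination (c^2) * h2
      rw [Finset.sum_congr rfl hto]
      rw [Finset.sum_add_distrib, Finset.sum_sub_distrib]
      have em : ∑ u ∈ S i, 2*c*(Real.sqrt (deg u) * f (Fin.castLE hkn.le j) u) =
          2*c*(sv * ⟪f (Fin.castLE hkn.le j), gbar i⟫) := by
        rw [← Finset.mul_sum, hαind i (Fin.castLE hkn.le j), hsv]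
      have el : ∑ u ∈ S i, deg u * c^2 = gVol deg (S i) * c^2 := by
        rw [← Finset.sum_mul, gVol]
      rw [em, el]
      have e1 : 2*c*(sv * ⟪f (Fin.castLE hkn.le j), gbar i⟫) =
          2 * (⟪f (Fin.castLE hkn.le j), gbar i⟫ : ℝ)^2 := by
        rw [hc']
        field_simp
      have e2 : gVol deg (S i) * c^2 = (⟪f (Fin.castLE hkn.le j), gbar i⟫ : ℝ)^2 := by
        rw [hc', ← hssv]
        field_simp
      rw [e1, e2]
      ring
    rw [Finset.sum_congr rfl fun i _ => hper i, Finset.sum_comm]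
    have hTone : ∀ j : Fin k, ∑ i, ∑ u ∈ S i, (f (Fin.castLE hkn.le j) u)^2 = 1 := by
      intro j
      rw [auxPart S hS.2.1 iS hiS (fun i u => (f (Fin.castLE hkn.le j) u)^2)]
      rw [← auxNormSq (f (Fin.castLE hkn.le j)), hf.1 (Fin.castLE hkn.le j), one_pow]
    have hmain : ∑ j : Fin k, ∑ i, ((∑ u ∈ S i, (f (Fin.castLE hkn.le j) u)^2) -
        (⟪f (Fin.castLE hkn.le j), gbar i⟫ : ℝ)^2) =
        (k : ℝ) - ∑ i, ∑ j : Fin k, (⟪f (Fin.castLE hkn.le j), gbar i⟫ : ℝ)^2 := by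
      have : ∀ j : Fin k, ∑ i, ((∑ u ∈ S i, (f (Fin.castLE hkn.le j) u)^2) -
          (⟪f (Fin.castLE hkn.le j), gbar i⟫ : ℝ)^2) =
          1 - ∑ i, (⟪f (Fin.castLE hkn.le j), gbar i⟫ : ℝ)^2 := by
        intro j
        rw [Finset.sum_sub_distrib, hTone j]
      rw [Finset.sum_congr rfl fun j _ => this j, Finset.sum_sub_distrib, Finset.sum_comm]
      simp
    rw [hmain]
    have hlow : (k : ℝ) * (1 - ε) ≤
        ∑ i, ∑ j : Fin k, (⟪f (Fin.castLE hkn.le j), gbar i⟫ : ℝ)^2 := by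
      calc (k : ℝ) * (1 - ε) = ∑ _i : Fin k, (1 - ε) := by
            rw [Finset.sum_const, Finset.card_univ, Fintype.card_fin, nsmul_eq_mul]
        _ ≤ ∑ i, ∑ j : Fin k, (⟪f (Fin.castLE hkn.le j), gbar i⟫ : ℝ)^2 :=
            Finset.sum_le_sum fun i _ => hhead i
    linarith
  -- cost in per-vertex form
  have hcostsum : ∑ u, deg u * ‖F u - c (jA u)‖^2 ≤ APT * k / Upsilon := by
    have h1 := auxPart A hA.2.1 jA hjA (fun i u => deg u * ‖F u - c i‖^2)
    rw [← h1]
    have h2 : ∀ i, ∑ u ∈ A i, deg u * ‖F u - c i‖^2 =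
        ∑ u ∈ A i, deg u * ‖F u - kmCentre deg F (A i)‖^2 := by
      intro i; rw [hc i]
    rw [Finset.sum_congr rfl fun i _ => h2 i]
    exact hcost
  -- membership characterisations
  have hMS : ∀ u i, u ∈ S i ↔ iS u = i := by
    intro u i
    constructor
    · intro hu
      by_contra hne
      exact (Finset.disjoint_left.mp (hS.2.1 i (iS u) (fun h => hne h.symm))) hu (hiS u)
    · rintro rfl; exact hiS u
  have hAu : ∀ u i, u ∈ A i ↔ jA u = i := by
    intro u i
    constructor
    · intro hu
      by_contra hne
      exact (Finset.disjoint_left.mp (hA.2.1 i (jA u) (fun h => hne h.symm))) hu (hjA u)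
    · rintro rfl; exact hjA u
  have hMM : ∀ u i, u ∈ M i ↔ sigma (jA u) = i := by
    intro u i
    rw [hM i, Finset.mem_biUnion]
    constructor
    · rintro ⟨j, hj, hu⟩
      rw [Finset.mem_filter] at hj
      rw [← (hAu u j).mp hu] at hj
      exact hj.2
    · intro h
      exact ⟨jA u, Finset.mem_filter.mpr ⟨Finset.mem_univ _, h⟩, hjA u⟩
  -- per-vertex bound
  have hperu : ∀ u, (∑ i, if u ∈ symmDiff (M i) (S i) then deg u / gVol deg (S i) else 0) ≤
      16 * (deg u * ‖F u - c (jA u)‖^2 + deg u * ‖F u - p (iS u)‖^2) := by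
    intro u
    have hEnn : 0 ≤ deg u * ‖F u - c (jA u)‖^2 + deg u * ‖F u - p (iS u)‖^2 :=
      add_nonneg (mul_nonneg (hdegpos u).le (sq_nonneg _))
        (mul_nonneg (hdegpos u).le (sq_nonneg _))
    by_cases hcase : sigma (jA u) = iS u
    · have hzero : ∀ i, (if u ∈ symmDiff (M i) (S i) then deg u / gVol deg (S i) else 0) = 0 := by
        intro i
        have : u ∉ symmDiff (M i) (S i) := by
          rw [Finset.mem_symmDiff]
          rintro (⟨h1, h2⟩ | ⟨h1, h2⟩)
          · exact h2 ((hMS u i).mpr (hcase ▸ (hMM u i).mp h1))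
          · exact h2 ((hMM u i).mpr (hcase.trans ((hMS u i).mp h1)))
        rw [if_neg this]
      rw [Finset.sum_congr rfl fun i _ => hzero i, Finset.sum_const_zero]
      linarith
    · have hmem : ∀ i, u ∈ symmDiff (M i) (S i) ↔ (i = sigma (jA u) ∨ i = iS u) := by
        intro i
        rw [Finset.mem_symmDiff]
        constructor
        · rintro (⟨h1, _⟩ | ⟨h1, _⟩)
          · exact Or.inl ((hMM u i).mp h1).symm
          · exact Or.inr ((hMS u i).mp h1).symm
        · rintro (rfl | rfl)
          · exact Or.inl ⟨(hMM u _).mpr rfl, fun h => hcase ((hMS u _).mp h).symm⟩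
          · exact Or.inr ⟨(hMS u _).mpr rfl, fun h => hcase ((hMM u _).mp h)⟩
      have hsplit2 : ∀ i, (if u ∈ symmDiff (M i) (S i) then deg u / gVol deg (S i) else 0) =
          (if i = sigma (jA u) then deg u / gVol deg (S i) else 0) +
          (if i = iS u then deg u / gVol deg (S i) else 0) := by
        intro i
        by_cases h1 : i = sigma (jA u)
        · have h2 : ¬ i = iS u := fun h => hcase (h1.symm.trans h)
          rw [if_pos ((hmem i).mpr (Or.inl h1)), if_pos h1, if_neg h2, add_zero]
        · by_cases h2 : i = iS u
          · rw [if_pos ((hmem i).mpr (Or.inr h2)), if_neg h1, if_pos h2, zero_add]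
          · have : u ∉ symmDiff (M i) (S i) := fun h => by
              rcases (hmem i).mp h with h' | h'
              · exact h1 h'
              · exact h2 h'
            rw [if_neg this, if_neg h1, if_neg h2, add_zero]
      rw [Finset.sum_congr rfl fun i _ => hsplit2 i, Finset.sum_add_distrib,
        Finset.sum_ite_eq' univ (sigma (jA u)) (fun i => deg u / gVol deg (S i)),
        Finset.sum_ite_eq' univ (iS u) (fun i => deg u / gVol deg (S i))]
      simp only [Finset.mem_univ, if_true]
      -- geometry
      have hg1 : ‖p (sigma (jA u)) - c (jA u)‖ ≤ ‖p (iS u) - c (jA u)‖ := hsigma (jA u) (iS u)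
      have hg2 := auxGeo (F u) (c (jA u)) (p (iS u)) (p (sigma (jA u))) hg1
      have hs := hsep (iS u) (sigma (jA u)) (fun h => hcase h.symm)
      set vi : ℝ := gVol deg (S (iS u)) with hvi
      set vs : ℝ := gVol deg (S (sigma (jA u))) with hvs
      have hvip : 0 < vi := hvolpos _
      have hvsp : 0 < vs := hvolpos _
      have hX : 0 ≤ 1/vi + 1/vs := by positivity
      have hXY : (1 - 2*ε) * (1/vi + 1/vs) ≤
          8 * (‖F u - c (jA u)‖^2 + ‖F u - p (iS u)‖^2) := le_trans hs hg2
      have hXle : 1/vi + 1/vs ≤ 16 * (‖F u - c (jA u)‖^2 + ‖F u - p (iS u)‖^2) := by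
        have hεX : ε * (1/vi + 1/vs) ≤ (1/32) * (1/vi + 1/vs) :=
          mul_le_mul_of_nonneg_right hεb hX
        nlinarith
      have := mul_le_mul_of_nonneg_left hXle (hdegpos u).le
      calc deg u / vs + deg u / vi = deg u * (1/vi + 1/vs) := by ring
        _ ≤ deg u * (16 * (‖F u - c (jA u)‖^2 + ‖F u - p (iS u)‖^2)) := this
        _ = 16 * (deg u * ‖F u - c (jA u)‖^2 + deg u * ‖F u - p (iS u)‖^2) := by ring
  -- final assembly
  have hT : ∑ i : Fin k, gVol deg (symmDiff (M i) (S i)) / gVol deg (S i) =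
      ∑ u, ∑ i, if u ∈ symmDiff (M i) (S i) then deg u / gVol deg (S i) else 0 := by
    rw [Finset.sum_comm]
    apply Finset.sum_congr rfl
    intro i _
    rw [gVol, Finset.sum_div]
    rw [← Finset.sum_subset (Finset.subset_univ (symmDiff (M i) (S i)))
      (fun u _ hu => by rw [if_neg hu] :
        ∀ u ∈ univ, u ∉ symmDiff (M i) (S i) →
          (if u ∈ symmDiff (M i) (S i) then deg u / gVol deg (S i) else 0) = 0)]
    apply Finset.sum_congr rfl
    intro u hu
    rw [if_pos hu]
  rw [hT]
  have hstep : ∑ u, ∑ i, (if u ∈ symmDiff (M i) (S i) then deg u / gVol deg (S i) else 0) ≤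
      16 * ((APT * k / Upsilon) + k * ε) := by
    calc ∑ u, ∑ i, (if u ∈ symmDiff (M i) (S i) then deg u / gVol deg (S i) else 0)
        ≤ ∑ u, 16 * (deg u * ‖F u - c (jA u)‖^2 + deg u * ‖F u - p (iS u)‖^2) :=
          Finset.sum_le_sum fun u _ => hperu u
      _ = 16 * ((∑ u, deg u * ‖F u - c (jA u)‖^2) + ∑ u, deg u * ‖F u - p (iS u)‖^2) := by
          rw [← Finset.sum_add_distrib, ← Finset.mul_sum]
      _ ≤ 16 * ((APT * k / Upsilon) + k * ε) := by
          have := hcostsum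
          have := hkey1
          linarith
  have hεk : (k:ℝ) * ε = k / Upsilon := by
    rw [hεU]
    rw [div_eq_mul_inv]
  have hfinal : 16 * ((APT * k / Upsilon) + k * ε) ≤ 64 * (1 + APT) * k / Upsilon := by
    rw [hεk]
    have hknn : (0:ℝ) ≤ k := Nat.cast_nonneg k
    have h1 : 0 ≤ (k:ℝ) / Upsilon := by positivity
    have h2 : APT * k / Upsilon = APT * (k / Upsilon) := by ring
    have h3 : 64 * (1 + APT) * k / Upsilon = 64 * (1 + APT) * (k / Upsilon) := by ring
    rw [h2, h3]
    nlinarith [mul_le_mul_of_nonneg_right (le_refl APT) h1]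
  linarith
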